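/- Let X = 𝔸ⁿ/μ_M(d₁,…,dₙ) with gcd(dᵢ, M) arbitrary but gcd(d₁,…,d̂ᵢ,…,dₙ, M) = 1 for every i, and let O_X(j) denote the ε^j-eigenspace of k[x₁,…,xₙ] under the μ_M-action xᵢ ↦ ε^{dᵢ}xᵢ, as a module over the invariant ring O_X = O_X(0). Then for the divisor Dⱼ = (xⱼ = 0)/μ_M, one has an isomorphism of O_X-modules O_X(Dⱼ) ≅ O_X(dⱼ), given by multiplication by xⱼ; concretely, xⱼ · O_X(Dⱼ) equals the span of monomials ∏xᵢ^{wᵢ} with wᵢ ≥ 0 and Σdᵢwᵢ ≡ dⱼ (mod M). -/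
import Mathlib


open Finset

/-- For `X = 𝔸ⁿ/μ_M(d₁,…,dₙ)` with `gcd(d₁,…,d̂ᵢ,…,dₙ,M)=1` for all `i`,
multiplication by `xⱼ` identifies `O_X(Dⱼ)` (monomials with `vⱼ ≥ -1`, `vᵢ ≥ 0` for
`i ≠ j`, `Σdᵢvᵢ ≡ 0 (mod M)`) with the eigenspace module `O_X(dⱼ)` (monomials with
`wᵢ ≥ 0` and `Σdᵢwᵢ ≡ dⱼ (mod M)`), inside the Laurent polynomial ring in `n`
variables modeled as the monoid algebra of `Fin n → ℤ`. -/
theorem mul_xj_image_eq_eigenspace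
    (k : Type*) [Field k] (n M : ℕ) (hM : 1 ≤ M) (hchar : (M : k) ≠ 0)
    (d : Fin n → ℤ)
    (h : ∀ i, Nat.gcd (((univ : Finset (Fin n)).erase i).gcd fun l => (d l).natAbs) M = 1)
    (j : Fin n) :
    let R := AddMonoidAlgebra k (Fin n → ℤ)
    let x : R := AddMonoidAlgebra.single (Pi.single j 1) (1 : k)
    let OX : ℤ → Submodule k R := fun t => Submodule.span k
      ((fun v : Fin n → ℤ => (AddMonoidAlgebra.single v (1 : k) : R)) ''
        {v | (∀ i, 0 ≤ v i) ∧ (M : ℤ) ∣ (∑ i, d i * v i) - t})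
    let OD : Submodule k R := Submodule.span k
      ((fun v : Fin n → ℤ => (AddMonoidAlgebra.single v (1 : k) : R)) ''
        {v | -1 ≤ v j ∧ (∀ i, i ≠ j → 0 ≤ v i) ∧ (M : ℤ) ∣ ∑ i, d i * v i})
    Submodule.map (LinearMap.mulLeft k x) OD = OX (d j) := by
  intro R x OX OD
  have hsum : ∀ v : Fin n → ℤ,
      ∑ i, d i * ((Pi.single j 1 + v) : Fin n → ℤ) i = d j + ∑ i, d i * v i := by
    intro v
    have : ∑ i, d i * (Pi.single j 1 : Fin n → ℤ) i = d j := by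
      rw [Finset.sum_eq_single j]
      · simp
      · intro b _ hb; simp [Pi.single_apply, hb]
      · simp
    simp [Pi.add_apply, mul_add, Finset.sum_add_distrib, this]
  have hmap : ∀ v : Fin n → ℤ, x * AddMonoidAlgebra.single v (1:k)
      = AddMonoidAlgebra.single (Pi.single j 1 + v) (1:k) := by
    intro v
    show AddMonoidAlgebra.single (Pi.single j 1) (1:k) * _ = _
    rw [AddMonoidAlgebra.single_mul_single, one_mul]
  rw [Submodule.map_span]
  congr 1
  ext r
  simp only [Set.mem_image, Set.mem_setOf_eq, LinearMap.mulLeft_apply]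
  constructor
  · rintro ⟨_, ⟨v, ⟨hvj, hv0, hvd⟩, rfl⟩, rfl⟩
    refine ⟨Pi.single j 1 + v, ⟨?_, ?_⟩, (hmap v).symm⟩
    · intro i
      by_cases hij : i = j
      · subst hij; simp only [Pi.add_apply, Pi.single_eq_same]; omega
      · simpa [Pi.single_apply, hij] using hv0 i hij
    · rw [hsum]; simpa using hvd
  · rintro ⟨w, ⟨hw0, hwd⟩, rfl⟩
    refine ⟨AddMonoidAlgebra.single ((w - Pi.single j 1 : Fin n → ℤ)) 1,
      ⟨(w - Pi.single j 1 : Fin n → ℤ), ⟨?_, ?_, ?_⟩, rfl⟩, ?_⟩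
    · have := hw0 j; simp only [Pi.sub_apply, Pi.single_eq_same]; omega
    · intro i hij
      have h1 := hw0 i
      have h2 : (Pi.single j 1 : Fin n → ℤ) i = 0 := Pi.single_eq_of_ne hij 1
      simp only [Pi.sub_apply, h2]
      omega
    · have := hsum ((w - Pi.single j 1 : Fin n → ℤ))
      simp only [add_sub_cancel] at this
      have h2 : ∑ i, d i * ((w - Pi.single j 1 : Fin n → ℤ)) i = (∑ i, d i * w i) - d j := by
        omega
      rw [h2]
      exact hwd
    · rw [hmap]
      congr 1
      simp
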